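/- Let y : Fin R → Fin m → ℝ be a spray matrix with m ≥ 1. If the bipartite support graph of y is acyclic (contains no cycle), then the number of multi-supported rows of y is at most m − 1. -/

import Mathlib

open SimpleGraph Walk in
lemma exists_parent_fn {V : Type*} {G : SimpleGraph V} (hG : G.IsAcyclic) (root : V → V)
    (hreach : ∀ v, G.Reachable v (root v)) (hconst : ∀ u v, G.Adj u v → root u = root v) :
    ∃ par : V → V, (∀ v, root v = v → par v = v) ∧
      ∀ u v, G.Adj u v → par u = v ∨ par v = u := by
  classical
  have huniq : ∀ v w : V, ∀ p q : G.Walk v w, p.IsPath → q.IsPath → p = q := by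
    intro v w p q hp hq
    exact Subtype.ext_iff.mp (hG.path_unique ⟨p, hp⟩ ⟨q, hq⟩)
  let p : ∀ v, G.Path v (root v) := fun v => (hreach v).some.toPath
  refine ⟨fun v => ((p v : G.Walk v (root v)).getVert 1), ?_, ?_⟩
  · intro v hv
    show ((p v : G.Walk v (root v)).getVert 1) = v
    have hcopy : (((p v : G.Walk v (root v))).copy rfl hv).IsPath := by
      rw [Walk.isPath_copy]; exact (p v).2
    have hnil := Walk.isPath_iff_eq_nil.mp hcopy
    have hlen : (p v : G.Walk v (root v)).length = 0 := by
      have := congrArg Walk.length hnil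
      simpa using this
    rw [Walk.getVert_of_length_le _ (by omega)]
    exact hv
  · intro u v h
    by_cases hv : v ∈ (p u : G.Walk u (root u)).support
    · left
      show ((p u : G.Walk u (root u)).getVert 1) = v
      have ht : ((p u : G.Walk u (root u)).takeUntil v hv).IsPath := (p u).2.takeUntil hv
      have hsingle : (Walk.cons h (Walk.nil) : G.Walk u v).IsPath := by
        simp [Walk.cons_isPath_iff, h.ne]
      have heq := huniq u v _ _ ht hsingle
      have hspec := Walk.take_spec (p u : G.Walk u (root u)) hv
      rw [heq] at hspec
      conv_lhs => rw [← hspec]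
      simp
    · right
      show ((p v : G.Walk v (root v)).getVert 1) = u
      have hQ : (Walk.cons h.symm (p u : G.Walk u (root u))).IsPath := by
        rw [Walk.cons_isPath_iff]
        exact ⟨(p u).2, hv⟩
      have hQ' : ((Walk.cons h.symm (p u : G.Walk u (root u))).copy rfl (hconst u v h)).IsPath := by
        simpa using hQ
      have heq := huniq v (root v) _ _ (p v).2 hQ'
      rw [heq]
      simp

/-- The bipartite support graph of a spray matrix `y : Fin R → Fin m → ℝ`: the simple
graph on `Fin R ⊕ Fin m` joining a row `r` to a column `j` exactly when `y r j > 0`. -/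
def supportGraph {R m : ℕ} (y : Fin R → Fin m → ℝ) : SimpleGraph (Fin R ⊕ Fin m) :=
  SimpleGraph.fromRel fun a b => ∃ r j, a = Sum.inl r ∧ b = Sum.inr j ∧ 0 < y r j

/-- If the bipartite support graph of a spray matrix `y` is acyclic, then at most
`m - 1` rows of `y` are multi-supported (have support of size at least two). -/
theorem acyclic_support_few_multi_supported_rows
    (R m : ℕ) (hm : 1 ≤ m)
    (y : Fin R → Fin m → ℝ)
    (hy_nonneg : ∀ r j, 0 ≤ y r j)
    (hacyclic : (supportGraph y).IsAcyclic) :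
    {r : Fin R | 2 ≤ {j : Fin m | 0 < y r j}.ncard}.ncard ≤ m - 1 := by
  classical
  set G := supportGraph y with hG
  have hadj : ∀ (r : Fin R) (j : Fin m), G.Adj (Sum.inl r) (Sum.inr j) ↔ 0 < y r j := by
    intro r j
    simp [hG, supportGraph, SimpleGraph.fromRel_adj]
  set M : Set (Fin R) := {r : Fin R | 2 ≤ {j : Fin m | 0 < y r j}.ncard} with hM
  rcases M.eq_empty_or_nonempty with hMe | ⟨r1, hr1⟩
  · simp [hMe]
  -- root function
  let pickRoot : G.ConnectedComponent → (Fin R ⊕ Fin m) := fun c =>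
    if h : ∃ r : Fin R, r ∈ M ∧ G.connectedComponentMk (Sum.inl r) = c
    then Sum.inl h.choose else Quot.out c
  have hmem : ∀ c, G.connectedComponentMk (pickRoot c) = c := by
    intro c
    simp only [pickRoot]
    split
    · next h => exact h.choose_spec.2
    · exact Quot.out_eq c
  let root : (Fin R ⊕ Fin m) → (Fin R ⊕ Fin m) := fun v => pickRoot (G.connectedComponentMk v)
  have hreach : ∀ v, G.Reachable v (root v) := by
    intro v
    exact (SimpleGraph.ConnectedComponent.exact (hmem (G.connectedComponentMk v))).symm
  have hconst : ∀ u v, G.Adj u v → root u = root v := by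
    intro u v h
    exact congrArg pickRoot (SimpleGraph.ConnectedComponent.connectedComponentMk_eq_of_adj h)
  obtain ⟨par, hparroot, horient⟩ := exists_parent_fn hacyclic root hreach hconst
  -- two support columns for multi rows
  have htwo : ∀ r : Fin R, r ∈ M → ∃ j1 j2 : Fin m, j1 ≠ j2 ∧ 0 < y r j1 ∧ 0 < y r j2 := by
    intro r hr
    have h1 : 1 < ({j : Fin m | 0 < y r j}).ncard := hr
    obtain ⟨j1, j2, hj1, hj2, hne⟩ := (Set.one_lt_ncard_iff (Set.toFinite _)).mp h1
    exact ⟨j1, j2, hne, hj1, hj2⟩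
  -- every multi row has a support column whose parent is the row
  have key : ∀ r : Fin R, r ∈ M → ∃ j : Fin m, 0 < y r j ∧ par (Sum.inr j) = Sum.inl r := by
    intro r hr
    obtain ⟨j1, j2, hne, h1, h2⟩ := htwo r hr
    rcases horient _ _ ((hadj r j1).mpr h1) with hA | hB
    · rcases horient _ _ ((hadj r j2).mpr h2) with hA' | hB'
      · exact absurd (hA.symm.trans hA') (by simp [hne])
      · exact ⟨j2, h2, hB'⟩
    · exact ⟨j1, h1, hB⟩
  -- the injection
  let f : Fin R → Fin m := fun r =>
    if h : r ∈ M then (key r h).choose else ⟨0, hm⟩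
  have hf : ∀ r : Fin R, r ∈ M → 0 < y r (f r) ∧ par (Sum.inr (f r)) = Sum.inl r := by
    intro r hr
    simp only [f, dif_pos hr]
    exact (key r hr).choose_spec
  have hinj : Set.InjOn f M := by
    intro r hr r' hr' hEq
    have h1 := (hf r hr).2
    have h2 := (hf r' hr').2
    rw [hEq] at h1
    exact Sum.inl_injective (h1.symm.trans h2)
  -- the root of r1's component is a multi row r0
  have hex : ∃ r ∈ M, G.connectedComponentMk (Sum.inl r) = G.connectedComponentMk (Sum.inl r1) :=
    ⟨r1, hr1, rfl⟩
  set r0 : Fin R := hex.choose with hr0def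
  have hr0spec := hex.choose_spec
  have hr0M : r0 ∈ M := hr0spec.1
  have hpick : pickRoot (G.connectedComponentMk (Sum.inl r1)) = Sum.inl r0 := by
    simp only [pickRoot, dif_pos hex]
    rfl
  have hroot0 : root (Sum.inl r0) = Sum.inl r0 := by
    show pickRoot (G.connectedComponentMk (Sum.inl r0)) = Sum.inl r0
    rw [hr0spec.2, hpick]
  have hpar0 : par (Sum.inl r0) = Sum.inl r0 := hparroot _ hroot0
  -- the missing column
  obtain ⟨j1, j2, hne, h1, h2⟩ := htwo r0 hr0M
  have hparj : ∀ j : Fin m, 0 < y r0 j → par (Sum.inr j) = Sum.inl r0 := by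
    intro j hj
    rcases horient _ _ ((hadj r0 j).mpr hj) with hA | hB
    · rw [hpar0] at hA; exact absurd hA (by simp)
    · exact hB
  have hstar : ∃ jstar : Fin m, jstar ≠ f r0 ∧ par (Sum.inr jstar) = Sum.inl r0 := by
    by_cases hc : j1 = f r0
    · exact ⟨j2, by rw [← hc]; exact hne.symm, hparj j2 h2⟩
    · exact ⟨j1, hc, hparj j1 h1⟩
  obtain ⟨jstar, hjne, hjpar⟩ := hstar
  have himage : f '' M ⊆ {jstar}ᶜ := by
    rintro j ⟨r, hr, rfl⟩
    simp only [Set.mem_compl_iff, Set.mem_singleton_iff]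
    intro hEq
    have := (hf r hr).2
    rw [hEq, hjpar] at this
    have hrr0 : r = r0 := Sum.inl_injective this.symm
    rw [hrr0] at hEq
    exact hjne hEq.symm
  -- count
  have h5 : M.ncard = (f '' M).ncard := (Set.ncard_image_of_injOn hinj).symm
  have h6 : (f '' M).ncard ≤ ({jstar}ᶜ : Set (Fin m)).ncard :=
    Set.ncard_le_ncard himage (Set.toFinite _)
  have h7 : ({jstar} : Set (Fin m)).ncard + ({jstar}ᶜ : Set (Fin m)).ncard = m := by
    rw [Set.ncard_add_ncard_compl]
    simp [Nat.card_eq_fintype_card]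
  have h8 : ({jstar} : Set (Fin m)).ncard = 1 := Set.ncard_singleton _
  omega
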